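/- The group SO(2,1) = {g ∈ GL(3,ℝ) : gᵀJg = J and det g = 1}, where J = diag(1,1,−1), regarded as a topological subspace of the 3×3 real matrices, has exactly two connected components. -/

import Mathlib

open Matrix Real

/-- `J = diag(1,1,−1)`. -/
def Jmat : Matrix (Fin 3) (Fin 3) ℝ := !![1, 0, 0; 0, 1, 0; 0, 0, -1]

namespace SO21aux

abbrev M3 := Matrix (Fin 3) (Fin 3) ℝ

def S : Set M3 := {g | gᵀ * Jmat * g = Jmat ∧ g.det = 1}

lemma one_mem : (1 : M3) ∈ S := by
  constructor
  · simp
  · simp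

lemma mul_mem {g h : M3} (hg : g ∈ S) (hh : h ∈ S) : g * h ∈ S := by
  obtain ⟨hg1, hg2⟩ := hg
  obtain ⟨hh1, hh2⟩ := hh
  constructor
  · have : (g * h)ᵀ * Jmat * (g * h) = hᵀ * (gᵀ * Jmat * g) * h := by
      rw [transpose_mul]; noncomm_ring
    rw [this, hg1, hh1]
  · rw [det_mul, hg2, hh2, mul_one]

lemma JJ : Jmat * Jmat = 1 := by
  rw [Jmat, Matrix.mul_fin_three, one_fin_three]; norm_num

lemma left_inv {g : M3} (hg : g ∈ S) : (Jmat * gᵀ * Jmat) * g = 1 := by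
  have := hg.1
  calc (Jmat * gᵀ * Jmat) * g = Jmat * (gᵀ * Jmat * g) := by noncomm_ring
  _ = Jmat * Jmat := by rw [this]
  _ = 1 := JJ

lemma right_inv {g : M3} (hg : g ∈ S) : g * (Jmat * gᵀ * Jmat) = 1 :=
  mul_eq_one_comm.mp (left_inv hg)

lemma col_rel {g : M3} (hg : g ∈ S) :
    (g 0 2)^2 + (g 1 2)^2 - (g 2 2)^2 = -1 := by
  have h := congrArg (fun m => m 2 2) hg.1
  simp [Matrix.mul_apply, Fin.sum_univ_three, Jmat] at h
  ring_nf at h ⊢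
  linarith [h]


noncomputable def cfun (a b : ℝ) : ℝ := Real.sqrt (1 + a^2 + b^2)

lemma cfun_sq (a b : ℝ) : (cfun a b)^2 = 1 + a^2 + b^2 := by
  rw [cfun, sq_sqrt]; positivity

lemma cfun_pos (a b : ℝ) : 0 < cfun a b := by
  rw [cfun]; positivity

lemma one_add_cfun_ne (a b : ℝ) : 1 + cfun a b ≠ 0 := by
  have := cfun_pos a b; positivity

noncomputable def L (a b : ℝ) : M3 :=
  !![1 + a^2/(1 + cfun a b), a*b/(1 + cfun a b), a;
     a*b/(1 + cfun a b), 1 + b^2/(1 + cfun a b), b;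
     a, b, cfun a b]

noncomputable def Lc (a b c : ℝ) : M3 :=
  !![1 + a^2/(1 + c), a*b/(1 + c), a;
     a*b/(1 + c), 1 + b^2/(1 + c), b;
     a, b, c]

lemma L_eq (a b : ℝ) : L a b = Lc a b (cfun a b) := rfl

lemma Lc_transpose (a b c : ℝ) : (Lc a b c)ᵀ = Lc a b c := by
  ext i j; fin_cases i <;> fin_cases j <;> simp [Lc]

set_option maxHeartbeats 1000000 in
lemma Lc_mem (a b c : ℝ) (hc : c^2 = 1 + a^2 + b^2) (hpos : 0 < c) : Lc a b c ∈ S := by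
  have hd : 1 + c ≠ 0 := by positivity
  constructor
  · rw [Lc_transpose]
    ext i j
    fin_cases i <;> fin_cases j <;>
      simp [Lc, Jmat, Matrix.mul_apply, Fin.sum_univ_three, Matrix.vecHead, Matrix.vecTail] <;>
      try field_simp
    · linear_combination (-a^2)*hc
    · linear_combination (-(a*b))*hc
    · linear_combination (-a)*hc
    · linear_combination (-(a*b))*hc
    · linear_combination (-b^2)*hc
    · linear_combination (-b)*hc
    · linear_combination (-a)*hc
    · linear_combination (-b)*hc
    · linear_combination (-1 : ℝ)*hc
  · rw [Lc, Matrix.det_fin_three]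
    simp only [Matrix.cons_val_zero, Matrix.cons_val_one, Matrix.head_cons, Matrix.cons_val_two,
      Matrix.tail_cons, Matrix.head_fin_const, Matrix.of_apply, Matrix.cons_val', Matrix.empty_val',
      Matrix.cons_val_fin_one, Matrix.vecHead, Matrix.vecTail, Function.comp_apply, Fin.succ_zero_eq_one]
    field_simp
    linear_combination (1+c)*hc

lemma L_mem (a b : ℝ) : L a b ∈ S := by
  rw [L_eq]; exact Lc_mem a b _ (cfun_sq a b) (cfun_pos a b)


noncomputable def R (t : ℝ) : M3 :=
  !![Real.cos t, -Real.sin t, 0; Real.sin t, Real.cos t, 0; 0, 0, 1]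

lemma R_mem (t : ℝ) : R t ∈ S := by
  have h := Real.sin_sq_add_cos_sq t
  constructor
  · ext i j
    fin_cases i <;> fin_cases j <;>
      simp [R, Jmat, Matrix.mul_apply, Fin.sum_univ_three, Matrix.vecHead, Matrix.vecTail] <;>
      linarith
  · rw [R, Matrix.det_fin_three]
    simp [Matrix.vecHead, Matrix.vecTail]
    nlinarith [h]

lemma R_zero : R 0 = 1 := by
  rw [R, one_fin_three]; norm_num

def nmat : M3 := !![-1, 0, 0; 0, 1, 0; 0, 0, -1]

lemma nmat_mem : nmat ∈ S := by
  constructor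
  · ext i j
    fin_cases i <;> fin_cases j <;>
      simp [nmat, Jmat, Matrix.mul_apply, Fin.sum_univ_three, Matrix.vecHead, Matrix.vecTail]
  · rw [nmat, Matrix.det_fin_three]; simp

lemma nmat_sq : nmat * nmat = 1 := by
  rw [nmat, Matrix.mul_fin_three, one_fin_three]; norm_num

lemma cfun_continuous : Continuous fun p : ℝ × ℝ => cfun p.1 p.2 := by
  unfold cfun; fun_prop

lemma L_continuous : Continuous fun p : ℝ × ℝ => L p.1 p.2 := by
  have hc : Continuous fun p : ℝ × ℝ => cfun p.1 p.2 := cfun_continuous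
  have hd : Continuous fun p : ℝ × ℝ => 1 + cfun p.1 p.2 := continuous_const.add hc
  have hdne : ∀ p : ℝ × ℝ, 1 + cfun p.1 p.2 ≠ 0 := fun p => one_add_cfun_ne _ _
  refine continuous_matrix fun i j => ?_
  fin_cases i <;> fin_cases j <;>
    simp only [L, Matrix.cons_val_zero, Matrix.cons_val_one, Matrix.head_cons, Matrix.cons_val_two,
      Matrix.tail_cons, Matrix.head_fin_const, Matrix.of_apply, Matrix.cons_val', Matrix.empty_val',
      Matrix.cons_val_fin_one, Matrix.vecHead, Matrix.vecTail]
  · exact continuous_const.add (((continuous_fst.pow 2)).div hd hdne)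
  · exact (continuous_fst.mul continuous_snd).div hd hdne
  · exact continuous_fst
  · exact (continuous_fst.mul continuous_snd).div hd hdne
  · exact continuous_const.add (((continuous_snd.pow 2)).div hd hdne)
  · exact continuous_snd
  · exact continuous_fst
  · exact continuous_snd
  · exact hc


lemma joinedIn_of {x y : M3} (γ : ℝ → M3) (hγ : Continuous γ)
    (hS : ∀ t : ℝ, γ t ∈ S) (h0 : γ 0 = x) (h1 : γ 1 = y) : JoinedIn S x y := by
  refine ⟨⟨⟨fun t => γ t, hγ.comp continuous_subtype_val⟩, ?_, ?_⟩, fun t => hS t⟩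
  · simpa using h0
  · simpa using h1

lemma exists_cos_sin {p r : ℝ} (h : p^2 + r^2 = 1) :
    ∃ θ : ℝ, Real.cos θ = p ∧ Real.sin θ = r := by
  have hp1 : -1 ≤ p := by nlinarith
  have hp2 : p ≤ 1 := by nlinarith
  rcases le_or_gt 0 r with hr | hr
  · refine ⟨Real.arccos p, Real.cos_arccos hp1 hp2, ?_⟩
    rw [Real.sin_arccos]
    rw [show 1 - p^2 = r^2 by linarith, Real.sqrt_sq hr]
  · refine ⟨-Real.arccos p, by rw [Real.cos_neg, Real.cos_arccos hp1 hp2], ?_⟩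
    rw [Real.sin_neg, Real.sin_arccos]
    rw [show 1 - p^2 = r^2 by linarith, Real.sqrt_sq_eq_abs, abs_of_neg hr, neg_neg]

lemma R_joined_one (θ : ℝ) : JoinedIn S (R θ) 1 := by
  refine joinedIn_of (fun t => R ((1 - t) * θ)) ?_ (fun t => R_mem _) (by norm_num) ?_
  · have : Continuous fun t : ℝ => (1 - t) * θ := by fun_prop
    refine continuous_matrix fun i j => ?_
    fin_cases i <;> fin_cases j <;>
      · simp [R, Matrix.vecHead, Matrix.vecTail]
        fun_prop
  · simp [R_zero]

set_option maxHeartbeats 1000000 in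
lemma joined_to_one {g : M3} (hg : g ∈ S) (hpos : 0 < g 2 2) : JoinedIn S g 1 := by
  set a := g 0 2 with ha
  set b := g 1 2 with hb
  have hrel : (g 2 2)^2 = 1 + a^2 + b^2 := by have := col_rel hg; nlinarith [this]
  have hcf : cfun a b = g 2 2 := by
    rw [cfun, ← hrel, Real.sqrt_sq hpos.le]
  -- k fixes e₂
  set k : M3 := L (-a) (-b) * g with hk
  have hLinv : L a b * L (-a) (-b) = 1 := by
    have h1 : Jmat * (L a b)ᵀ * Jmat = L (-a) (-b) := by
      rw [L_eq, L_eq, Lc_transpose]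
      have hcc : cfun (-a) (-b) = cfun a b := by rw [cfun, cfun]; ring_nf
      rw [hcc]
      ext i j
      fin_cases i <;> fin_cases j <;>
        simp [Lc, Jmat, Matrix.mul_apply, Fin.sum_univ_three, Matrix.vecHead, Matrix.vecTail] <;>
        ring
    rw [← h1]
    exact right_inv (L_mem a b)
  have hgLk : L a b * k = g := by
    rw [hk, ← Matrix.mul_assoc, hLinv, Matrix.one_mul]
  have hkS : k ∈ S := mul_mem (L_mem (-a) (-b)) hg
  -- compute the third column of k
  have hc2 : cfun (-a) (-b) = g 2 2 := by
    rw [cfun, show (-a)^2 = a^2 by ring, show (-b)^2 = b^2 by ring, ← hrel,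
      Real.sqrt_sq hpos.le]
  have hdne : 1 + g 2 2 ≠ 0 := by positivity
  have hk02 : k 0 2 = 0 := by
    rw [hk, L_eq, hc2, Matrix.mul_apply, Fin.sum_univ_three]
    simp [Lc, Matrix.vecHead, Matrix.vecTail, ← ha, ← hb]
    field_simp
    linear_combination (-a) * hrel
  have hk12 : k 1 2 = 0 := by
    rw [hk, L_eq, hc2, Matrix.mul_apply, Fin.sum_univ_three]
    simp [Lc, Matrix.vecHead, Matrix.vecTail, ← ha, ← hb]
    field_simp
    linear_combination (-b) * hrel
  have hk22 : k 2 2 = 1 := by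
    rw [hk, L_eq, hc2, Matrix.mul_apply, Fin.sum_univ_three]
    simp [Lc, Matrix.vecHead, Matrix.vecTail, ← ha, ← hb]
    linear_combination hrel
  -- entries of kᵀ J k = J
  have hent : ∀ i j : Fin 3,
      k 0 i * k 0 j + k 1 i * k 1 j - k 2 i * k 2 j = Jmat i j := by
    intro i j
    have h := congrArg (fun m => m i j) hkS.1
    simp only [Matrix.mul_apply, Fin.sum_univ_three, Matrix.transpose_apply] at h
    simp [Jmat, Matrix.vecHead, Matrix.vecTail] at h ⊢
    linear_combination h
  have e02 := hent 0 2
  have e12 := hent 1 2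
  have e00 := hent 0 0
  have e01 := hent 0 1
  have e11 := hent 1 1
  simp [Jmat, Matrix.vecHead, Matrix.vecTail, hk02, hk12, hk22] at e02 e12 e00 e01 e11
  rw [e02] at e00 e01
  rw [e12] at e01 e11
  ring_nf at e00 e01 e11
  -- e02 : k 2 0 = 0, e12 : k 2 1 = 0
  have hdet := hkS.2
  rw [Matrix.det_fin_three, hk02, hk12, hk22, e02, e12] at hdet
  ring_nf at hdet
  -- now the 2x2 block
  have hs : k 1 1 = k 0 0 := by
    first
    | linear_combination (-(k 1 1))*e00 + (k 0 0)*hdet + (k 1 0)*e01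
    | linear_combination (k 1 1)*e00 - (k 0 0)*hdet - (k 1 0)*e01
  have hq : k 0 1 = -(k 1 0) := by
    first
    | linear_combination (k 0 1)*e00 + (k 1 0)*hdet - (k 0 0)*e01
    | linear_combination (-(k 0 1))*e00 - (k 1 0)*hdet + (k 0 0)*e01
  obtain ⟨θ, hcos, hsin⟩ := exists_cos_sin (p := k 0 0) (r := k 1 0) (by nlinarith [e00])
  have hkR : k = R θ := by
    ext i j
    fin_cases i <;> fin_cases j <;>
      simp [R, Matrix.vecHead, Matrix.vecTail, hcos, hsin, hk02, hk12, hk22, e02, e12, hs, hq]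
  -- path from g to k
  have hgk : JoinedIn S g k := by
    refine joinedIn_of (fun t => L ((1-t)*a) ((1-t)*b) * k) ?_
      (fun t => mul_mem (L_mem _ _) hkS) ?_ ?_
    · exact (L_continuous.comp (by fun_prop :
        Continuous fun t : ℝ => (((1-t)*a, (1-t)*b) : ℝ × ℝ))).matrix_mul continuous_const
    · norm_num [hgLk]
    · norm_num
      have hL00 : L 0 0 = 1 := by
        rw [L_eq, one_fin_three]
        have : cfun 0 0 = 1 := by rw [cfun]; norm_num
        rw [Lc, this]
        norm_num
      rw [hL00, Matrix.one_mul]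
  exact hgk.trans (hkR ▸ R_joined_one θ)

lemma joined_to_n {g : M3} (hg : g ∈ S) (hneg : g 2 2 < 0) : JoinedIn S g nmat := by
  have hng : nmat * g ∈ S := mul_mem nmat_mem hg
  have hpos : 0 < (nmat * g) 2 2 := by
    rw [Matrix.mul_apply, Fin.sum_univ_three]
    simp [nmat, Matrix.vecHead, Matrix.vecTail]
    linarith
  have h1 : JoinedIn S (nmat * g) 1 := joined_to_one hng hpos
  have h2 := h1.map (f := fun m : M3 => nmat * m) (continuous_const.matrix_mul continuous_id)
  have h3 : JoinedIn S (nmat * (nmat * g)) (nmat * 1) := by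
    refine h2.mono ?_
    rintro x ⟨y, hy, rfl⟩
    exact mul_mem nmat_mem hy
  rw [← Matrix.mul_assoc, nmat_sq, Matrix.one_mul, Matrix.mul_one] at h3
  exact h3

end SO21aux

open SO21aux in
/-- The Lorentz group `SO(2,1)`, regarded as a topological subspace of the real
3×3 matrices, has exactly two connected components. -/
theorem SO21_has_two_connected_components :
    Nat.card (ConnectedComponents
      {g : Matrix (Fin 3) (Fin 3) ℝ // gᵀ * Jmat * g = Jmat ∧ g.det = 1}) = 2 := by
  show Nat.card (ConnectedComponents (Subtype (· ∈ S))) = 2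
  set X := Subtype (· ∈ S) with hX
  have hne : ∀ x : X, x.1 2 2 ≠ 0 := by
    intro x
    have := col_rel x.2
    intro h
    rw [h] at this
    nlinarith [sq_nonneg (x.1 0 2), sq_nonneg (x.1 1 2)]
  have hc22 : Continuous fun x : X => x.1 2 2 :=
    (continuous_apply (2 : Fin 3)).comp ((continuous_apply (2 : Fin 3)).comp
      continuous_subtype_val)
  set f : X → Bool := fun x => decide (0 < x.1 2 2) with hfdef
  have hopen1 : IsOpen {x : X | 0 < x.1 2 2} := isOpen_lt continuous_const hc22
  have hopen2 : IsOpen {x : X | x.1 2 2 < 0} := isOpen_lt hc22 continuous_const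
  have hf : Continuous f := by
    rw [← IsLocallyConstant.iff_continuous]
    intro s
    by_cases ht : true ∈ s <;> by_cases hfs : false ∈ s
    · have : f ⁻¹' s = Set.univ := by
        ext x; simp only [Set.mem_preimage, Set.mem_univ, iff_true]
        cases h : f x
        · exact hfs
        · exact ht
      rw [this]; exact isOpen_univ
    · have : f ⁻¹' s = {x : X | 0 < x.1 2 2} := by
        ext x
        simp only [Set.mem_preimage, Set.mem_setOf_eq, hfdef]
        constructor
        · intro hs
          by_contra hlt
          simp only [decide_eq_false hlt] at hs
          exact hfs hs
        · intro hx
          simpa [decide_eq_true_eq, hx] using ht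
      rw [this]; exact hopen1
    · have : f ⁻¹' s = {x : X | x.1 2 2 < 0} := by
        ext x
        simp only [Set.mem_preimage, Set.mem_setOf_eq, hfdef]
        constructor
        · intro hs
          rcases lt_trichotomy (x.1 2 2) 0 with h | h | h
          · exact h
          · exact absurd h (hne x)
          · simp only [decide_eq_true h] at hs
            exact absurd hs ht
        · intro hx
          have : ¬ (0 < x.1 2 2) := by linarith
          simpa [decide_eq_false this] using hfs
      rw [this]; exact hopen2
    · have : f ⁻¹' s = ∅ := by
        ext x
        simp only [Set.mem_preimage, Set.mem_empty_iff_false, iff_false]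
        intro hs
        cases h : f x
        · rw [h] at hs; exact hfs hs
        · rw [h] at hs; exact ht hs
      rw [this]; exact isOpen_empty
  have hbij : Function.Bijective hf.connectedComponentsLift := by
    constructor
    · intro c1 c2 hcc
      obtain ⟨x, rfl⟩ := ConnectedComponents.surjective_coe c1
      obtain ⟨y, rfl⟩ := ConnectedComponents.surjective_coe c2
      rw [hf.connectedComponentsLift_apply_coe, hf.connectedComponentsLift_apply_coe] at hcc
      rw [ConnectedComponents.coe_eq_coe]
      have hjoin : Joined x y := by
        rcases lt_trichotomy (x.1 2 2) 0 with hx | hx | hx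
        · have hy : y.1 2 2 < 0 := by
            rcases lt_trichotomy (y.1 2 2) 0 with h | h | h
            · exact h
            · exact absurd h (hne y)
            · exfalso
              have : f x = false := by simp [hfdef, not_lt.mpr hx.le, hne x, hx]
              have hyy : f y = true := by simp [hfdef, h]
              rw [this, hyy] at hcc; exact Bool.noConfusion hcc
          have j1 : JoinedIn S x.1 nmat := joined_to_n x.2 hx
          have j2 : JoinedIn S y.1 nmat := joined_to_n y.2 hy
          exact (j1.joined_subtype).trans (j2.joined_subtype).symm
        · exact absurd hx (hne x)
        · have hy : 0 < y.1 2 2 := by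
            rcases lt_trichotomy (y.1 2 2) 0 with h | h | h
            · exfalso
              have hxx : f x = true := by simp [hfdef, hx]
              have hyy : f y = false := by simp [hfdef, not_lt.mpr h.le]
              rw [hxx, hyy] at hcc; exact Bool.noConfusion hcc
            · exact absurd h (hne y)
            · exact h
          have j1 : JoinedIn S x.1 1 := joined_to_one x.2 hx
          have j2 : JoinedIn S y.1 1 := joined_to_one y.2 hy
          exact (j1.joined_subtype).trans (j2.joined_subtype).symm
      exact connectedComponent_eq (pathComponent_subset_component x
        (hjoin.mem_pathComponent (mem_pathComponent_self x)))
    · intro b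
      cases b
      · refine ⟨ConnectedComponents.mk ⟨nmat, nmat_mem⟩, ?_⟩
        rw [hf.connectedComponentsLift_apply_coe]
        simp [hfdef, nmat, Matrix.vecHead, Matrix.vecTail]
      · refine ⟨ConnectedComponents.mk ⟨1, one_mem⟩, ?_⟩
        rw [hf.connectedComponentsLift_apply_coe]
        simp [hfdef]
  rw [Nat.card_eq_of_bijective _ hbij]
  simp [Nat.card_eq_fintype_card]
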